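/- Let N₁ be the 6×6 integer matrix with rows (0,1,0,0,0,0), (1,0,1,1,0,0), (0,1,0,0,1,0), (0,1,0,1,1,0), (0,0,1,1,1,1), (0,0,0,0,1,1). Then the characteristic polynomial of N₁ has six distinct roots (N₁ has six distinct eigenvalues over ℂ). -/

import Mathlib

set_option maxRecDepth 40000
set_option maxHeartbeats 4000000
open Polynomial

private lemma cv5' {α : Type*} (a : α) (u : Fin 5 → α) : Matrix.vecCons a u 5 = u 4 := rfl
private lemma cv4' {α : Type*} (a : α) (u : Fin 4 → α) : Matrix.vecCons a u 4 = u 3 := rfl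
private lemma cv3' {α : Type*} (a : α) (u : Fin 3 → α) : Matrix.vecCons a u 3 = u 2 := rfl
private lemma cv2' {α : Type*} (a : α) (u : Fin 2 → α) : Matrix.vecCons a u 2 = u 1 := rfl
private lemma cv1' {α : Type*} (a : α) (u : Fin 1 → α) : Matrix.vecCons a u 1 = u 0 := rfl

private lemma charpoly_eq :
    Matrix.charpoly (!![0,1,0,0,0,0; 1,0,1,1,0,0; 0,1,0,0,1,0;
         0,1,0,1,1,0; 0,0,1,1,1,1; 0,0,0,0,1,1] : Matrix (Fin 6) (Fin 6) ℂ) =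
      X^6 - 3*X^5 - 3*X^4 + 11*X^3 - 3*X^2 - 3*X + 1 := by
  have hcm : Matrix.charmatrix (!![0,1,0,0,0,0; 1,0,1,1,0,0; 0,1,0,0,1,0;
         0,1,0,1,1,0; 0,0,1,1,1,1; 0,0,0,0,1,1] : Matrix (Fin 6) (Fin 6) ℂ) =
      !![(X:ℂ[X]),-1,0,0,0,0; -1,X,-1,-1,0,0; 0,-1,X,0,-1,0;
        0,-1,0,X-1,-1,0; 0,0,-1,-1,X-1,-1; 0,0,0,0,-1,X-1] := by
    rw [← Matrix.ext_iff]
    intro i j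
    fin_cases i <;> fin_cases j <;>
      simp [Matrix.charmatrix_apply, Matrix.one_apply, cv5', cv4', cv3', cv2', cv1',
        Matrix.vecHead, Matrix.vecTail]
  rw [Matrix.charpoly, hcm]
  simp [Matrix.det_succ_row_zero, Fin.sum_univ_succ, Fin.succAbove]
  ring

private lemma sep :
    (X^6 - 3*X^5 - 3*X^4 + 11*X^3 - 3*X^2 - 3*X + 1 : ℂ[X]).Separable := by
  have hd : (X^6 - 3*X^5 - 3*X^4 + 11*X^3 - 3*X^2 - 3*X + 1 : ℂ[X]).derivative
      = 6*X^5 - 15*X^4 - 12*X^3 + 33*X^2 - 6*X - 3 := by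
    simp [map_ofNat]
    ring
  refine ⟨C (81:ℂ)⁻¹ * (-249 - 1230*X + 918*X^2 + 624*X^3 - 312*X^4),
    C (81:ℂ)⁻¹ * (-110 + 59*X + 457*X^2 - 218*X^3 - 130*X^4 + 52*X^5), ?_⟩
  rw [hd]
  have key : (-249 - 1230*X + 918*X^2 + 624*X^3 - 312*X^4)
        * (X^6 - 3*X^5 - 3*X^4 + 11*X^3 - 3*X^2 - 3*X + 1 : ℂ[X])
      + (-110 + 59*X + 457*X^2 - 218*X^3 - 130*X^4 + 52*X^5)
        * (6*X^5 - 15*X^4 - 12*X^3 + 33*X^2 - 6*X - 3) = C 81 := by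
    have : (C 81 : ℂ[X]) = 81 := map_ofNat C 81
    rw [this]; ring
  calc C (81:ℂ)⁻¹ * (-249 - 1230*X + 918*X^2 + 624*X^3 - 312*X^4)
        * (X^6 - 3*X^5 - 3*X^4 + 11*X^3 - 3*X^2 - 3*X + 1)
      + C (81:ℂ)⁻¹ * (-110 + 59*X + 457*X^2 - 218*X^3 - 130*X^4 + 52*X^5)
        * (6*X^5 - 15*X^4 - 12*X^3 + 33*X^2 - 6*X - 3)
      = C (81:ℂ)⁻¹ * ((-249 - 1230*X + 918*X^2 + 624*X^3 - 312*X^4)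
        * (X^6 - 3*X^5 - 3*X^4 + 11*X^3 - 3*X^2 - 3*X + 1)
      + (-110 + 59*X + 457*X^2 - 218*X^3 - 130*X^4 + 52*X^5)
        * (6*X^5 - 15*X^4 - 12*X^3 + 33*X^2 - 6*X - 3)) := by ring
    _ = C (81:ℂ)⁻¹ * C 81 := by rw [key]
    _ = 1 := by rw [← C_mul]; norm_num

/-- The fusion matrix `N₁` of the object labelled `(1,0)` in the
integer-weight subcategory of `C(so₅, 9, q)` has six distinct eigenvalues
over `ℂ`: its characteristic polynomial has 6 distinct roots. -/
theorem stmt_10 :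
    let N₁ : Matrix (Fin 6) (Fin 6) ℂ :=
      !![0,1,0,0,0,0; 1,0,1,1,0,0; 0,1,0,0,1,0;
         0,1,0,1,1,0; 0,0,1,1,1,1; 0,0,0,0,1,1]
    (Matrix.charpoly N₁).roots.toFinset.card = 6 := by
  intro N₁
  rw [show Matrix.charpoly N₁ = X^6 - 3*X^5 - 3*X^4 + 11*X^3 - 3*X^2 - 3*X + 1 from charpoly_eq]
  have hsep := sep
  have hnodup := Polynomial.nodup_roots hsep
  rw [Multiset.toFinset_card_of_nodup hnodup]
  have hdeg : (X^6 - 3*X^5 - 3*X^4 + 11*X^3 - 3*X^2 - 3*X + 1 : ℂ[X]).natDegree = 6 := by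
    compute_degree!
  rw [Polynomial.splits_iff_card_roots.mp (IsAlgClosed.splits _)]
  exact hdeg
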